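/- Suppose f is C³ on a neighbourhood of x(0), x is three times differentiable at 0 along the pathway, the natural pathway equation f(x(t)) = (1−t) • f(x(0)) holds for all t ∈ [0,1], and J := f′(x(0)) is a continuous linear isomorphism from E onto F. Fix ε ∈ ℝ and define c_n := (εⁿ/n!) • x⁽ⁿ⁾(0). Then f⁽³⁾(x(0))[c₁,c₁,c₁] + 6 • f″(x(0))[c₁,c₂] + 6 • J(c₃) = 0, and hence c₃ = −(1/6) • J⁻¹( f⁽³⁾(x(0))[c₁,c₁,c₁] + 6 • f″(x(0))[c₁,c₂] ). -/

import Mathlib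

open Topology

private lemma iteratedFDeriv_three_apply' {E F : Type*} [NormedAddCommGroup E] [NormedSpace ℝ E]
    [NormedAddCommGroup F] [NormedSpace ℝ F] (f : E → F) (z : E) (m : Fin 3 → E) :
    iteratedFDeriv ℝ 3 f z m = fderiv ℝ (fderiv ℝ (fderiv ℝ f)) z (m 0) (m 1) (m 2) := by
  have h : iteratedFDeriv ℝ (2 + 1) f z m
      = fderiv ℝ (fderiv ℝ (fderiv ℝ f)) z (m 0) (m 1) (m 2) := by
    rw [iteratedFDeriv_succ_apply_right, iteratedFDeriv_two_apply]
    rfl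
  exact h

/-- Finite-step correction identity at third order: with
`c_n := (εⁿ/n!) • x⁽ⁿ⁾(0)` (derivatives taken along the pathway),
`f⁽³⁾(x 0)[c₁,c₁,c₁] + 6 • f″(x 0)[c₁,c₂] + 6 • J c₃ = 0`, hence
`c₃ = -(1/6) • J⁻¹ (f⁽³⁾(x 0)[c₁,c₁,c₁] + 6 • f″(x 0)[c₁,c₂])`. -/
theorem correction_third_order
    {E F : Type*} [NormedAddCommGroup E] [NormedSpace ℝ E] [CompleteSpace E]
    [NormedAddCommGroup F] [NormedSpace ℝ F] [CompleteSpace F]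
    (f : E → F) (x : ℝ → E)
    (hf : ContDiffAt ℝ 3 f (x 0))
    (hx1 : ∀ᶠ s in 𝓝[≥] (0 : ℝ), DifferentiableWithinAt ℝ x (Set.Ici 0) s)
    (hx2 : ∀ᶠ s in 𝓝[≥] (0 : ℝ),
      DifferentiableWithinAt ℝ (iteratedDerivWithin 1 x (Set.Ici 0)) (Set.Ici 0) s)
    (hx3 : DifferentiableWithinAt ℝ (iteratedDerivWithin 2 x (Set.Ici 0)) (Set.Ici 0) 0)
    (hpath : ∀ t ∈ Set.Icc (0 : ℝ) 1, f (x t) = (1 - t) • f (x 0))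
    (J : E ≃L[ℝ] F) (hJ : (J : E →L[ℝ] F) = fderiv ℝ f (x 0))
    (ε : ℝ) (c₁ c₂ c₃ : E)
    (hc₁ : c₁ = ε • derivWithin x (Set.Ici 0) 0)
    (hc₂ : c₂ = (ε ^ 2 / 2) • iteratedDerivWithin 2 x (Set.Ici 0) 0)
    (hc₃ : c₃ = (ε ^ 3 / 6) • iteratedDerivWithin 3 x (Set.Ici 0) 0) :
    iteratedFDeriv ℝ 3 f (x 0) ![c₁, c₁, c₁]
      + (6 : ℝ) • iteratedFDeriv ℝ 2 f (x 0) ![c₁, c₂] + (6 : ℝ) • J c₃ = 0 ∧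
    c₃ = -(1 / 6 : ℝ) • J.symm (iteratedFDeriv ℝ 3 f (x 0) ![c₁, c₁, c₁]
      + (6 : ℝ) • iteratedFDeriv ℝ 2 f (x 0) ![c₁, c₂]) := by
  have hs : UniqueDiffOn ℝ (Set.Ici (0 : ℝ)) := uniqueDiffOn_Ici 0
  have h0s : (0 : ℝ) ∈ Set.Ici (0 : ℝ) := Set.self_mem_Ici
  set s : Set ℝ := Set.Ici 0 with hsdef
  set f' : E → E →L[ℝ] F := fderiv ℝ f with hf'def
  set f'' : E → E →L[ℝ] E →L[ℝ] F := fderiv ℝ f' with hf''def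
  set f''' : E →L[ℝ] E →L[ℝ] E →L[ℝ] F := fderiv ℝ f'' (x 0) with hf'''def
  set x' : ℝ → E := derivWithin x s with hx'def
  set x'' : ℝ → E := derivWithin x' s with hx''def
  set a : E := x' 0 with hadef
  set b : E := x'' 0 with hbdef
  set c : E := derivWithin (iteratedDerivWithin 2 x s) s 0 with hcdef
  -- identification of iterated derivatives
  have hEq1 : Set.EqOn (iteratedDerivWithin 1 x s) x' s := fun t ht =>
    congrFun iteratedDerivWithin_one t
  have hEq2 : Set.EqOn (iteratedDerivWithin 2 x s) x'' s := fun t ht => by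
    rw [show iteratedDerivWithin 2 x s = iteratedDerivWithin (1 + 1) x s from rfl,
      iteratedDerivWithin_succ]
    exact derivWithin_congr hEq1 (hEq1 ht)
  have h3c : iteratedDerivWithin 3 x s 0 = c := by
    rw [hcdef, show iteratedDerivWithin 3 x s = iteratedDerivWithin (2 + 1) x s from rfl,
      iteratedDerivWithin_succ]
  -- local differentiability of f and its derivatives
  have heC : ∀ᶠ y in 𝓝 (x 0), ContDiffAt ℝ 3 f y := hf.eventually (by simp)
  have hdf : ∀ᶠ y in 𝓝 (x 0), HasFDerivAt f (f' y) y :=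
    heC.mono fun y hy => (hy.differentiableAt (by norm_num)).hasFDerivAt
  have hdf' : ∀ᶠ y in 𝓝 (x 0), HasFDerivAt f' (f'' y) y :=
    heC.mono fun y hy =>
      ((hy.fderiv_right (m := 2) (by norm_num)).differentiableAt (by norm_num)).hasFDerivAt
  have hdf'' : HasFDerivAt f'' f''' (x 0) :=
    (((hf.fderiv_right (m := 2) (by norm_num)).fderiv_right (m := 1)
      (by norm_num)).differentiableAt (by norm_num)).hasFDerivAt
  -- continuity of x at 0 within s
  have hx0 : DifferentiableWithinAt ℝ x s 0 := hx1.self_of_nhdsWithin h0s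
  have hxc : Filter.Tendsto x (𝓝[≥] (0 : ℝ)) (𝓝 (x 0)) := hx0.continuousWithinAt
  have hmemf : ∀ᶠ t in 𝓝[≥] (0 : ℝ), HasFDerivAt f (f' (x t)) (x t) := hxc.eventually hdf
  have hmemf' : ∀ᶠ t in 𝓝[≥] (0 : ℝ), HasFDerivAt f' (f'' (x t)) (x t) := hxc.eventually hdf'
  -- path equation eventually
  have hIcc : ∀ᶠ t in 𝓝[≥] (0 : ℝ), f (x t) = (1 - t) • f (x 0) := by
    have h1 : ∀ᶠ t in 𝓝[≥] (0 : ℝ), t ∈ Set.Icc (0 : ℝ) 1 := by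
      filter_upwards [mem_nhdsWithin_of_mem_nhds (Iio_mem_nhds one_pos),
        self_mem_nhdsWithin] with t h1 h2
      exact ⟨h2, le_of_lt h1⟩
    filter_upwards [h1] with t ht using hpath t ht
  -- derivative facts along the path
  have hX1 : ∀ᶠ t in 𝓝[≥] (0 : ℝ), HasDerivWithinAt x (x' t) s t :=
    hx1.mono fun t ht => ht.hasDerivWithinAt
  have hX2 : ∀ᶠ t in 𝓝[≥] (0 : ℝ), HasDerivWithinAt x' (x'' t) s t := by
    filter_upwards [hx2, self_mem_nhdsWithin] with t ht hts
    exact (ht.congr (fun y hy => (hEq1 hy).symm) (hEq1 hts).symm).hasDerivWithinAt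
  have hX3 : HasDerivWithinAt x'' c s 0 :=
    hx3.hasDerivWithinAt.congr (fun y hy => (hEq2 hy).symm) (hEq2 h0s).symm
  -- first differentiation of the pathway equation
  have hDg1 : ∀ᶠ t in 𝓝[≥] (0 : ℝ), HasDerivWithinAt (fun u => f (x u)) (-(f (x 0))) s t := by
    filter_upwards [eventually_eventually_nhdsWithin.2 hIcc, hIcc] with t ht h't
    have base : HasDerivWithinAt (fun u : ℝ => (1 - u) • f (x 0)) (-(f (x 0))) s t := by
      have h := (HasDerivAt.const_sub 1 (hasDerivAt_id t)).smul_const (f (x 0))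
      simpa using h.hasDerivWithinAt
    exact base.congr_of_eventuallyEq ht h't
  have hDg2 : ∀ᶠ t in 𝓝[≥] (0 : ℝ),
      HasDerivWithinAt (fun u => f (x u)) (f' (x t) (x' t)) s t := by
    filter_upwards [hX1, hmemf] with t h1 h2
    exact h2.comp_hasDerivWithinAt t h1
  have hF1 : ∀ᶠ t in 𝓝[≥] (0 : ℝ), f' (x t) (x' t) = -(f (x 0)) := by
    filter_upwards [hDg1, hDg2, self_mem_nhdsWithin] with t h1 h2 hts
    rw [← h2.derivWithin (hs t hts), h1.derivWithin (hs t hts)]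
  -- second differentiation
  have hDF1 : ∀ᶠ t in 𝓝[≥] (0 : ℝ), HasDerivWithinAt (fun u => f' (x u) (x' u))
      (f'' (x t) (x' t) (x' t) + f' (x t) (x'' t)) s t := by
    filter_upwards [hX1, hX2, hmemf'] with t h1 h2 h3
    exact (h3.comp_hasDerivWithinAt t h1).clm_apply h2
  have hDF1z : ∀ᶠ t in 𝓝[≥] (0 : ℝ),
      HasDerivWithinAt (fun u => f' (x u) (x' u)) 0 s t := by
    filter_upwards [eventually_eventually_nhdsWithin.2 hF1, hF1] with t ht h't
    exact (hasDerivWithinAt_const t s (-(f (x 0)))).congr_of_eventuallyEq ht h't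
  have hF2 : ∀ᶠ t in 𝓝[≥] (0 : ℝ), f'' (x t) (x' t) (x' t) + f' (x t) (x'' t) = 0 := by
    filter_upwards [hDF1, hDF1z, self_mem_nhdsWithin] with t h1 h2 hts
    rw [← h1.derivWithin (hs t hts), h2.derivWithin (hs t hts)]
  -- third differentiation, at 0 only
  have h10 : HasDerivWithinAt x a s 0 := hX1.self_of_nhdsWithin h0s
  have h20 : HasDerivWithinAt x' b s 0 := hX2.self_of_nhdsWithin h0s
  have hm0 : HasFDerivAt f' (f'' (x 0)) (x 0) := hdf'.self_of_nhds
  have hA : HasDerivWithinAt (fun u => f'' (x u)) (f''' a) s 0 :=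
    by have h := hdf''.comp_hasDerivWithinAt (l := f'') 0 h10; exact h
  have hB : HasDerivWithinAt (fun u => f'' (x u) (x' u)) (f''' a a + f'' (x 0) b) s 0 :=
    hA.clm_apply h20
  have hC : HasDerivWithinAt (fun u => f'' (x u) (x' u) (x' u))
      ((f''' a a + f'' (x 0) b) a + f'' (x 0) a b) s 0 := hB.clm_apply h20
  have hc0 : HasDerivWithinAt (fun u => f' (x u)) (f'' (x 0) a) s 0 :=
    hm0.comp_hasDerivWithinAt 0 h10
  have hD : HasDerivWithinAt (fun u => f' (x u) (x'' u))
      (f'' (x 0) a b + f' (x 0) c) s 0 := hc0.clm_apply hX3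
  have hSum : HasDerivWithinAt (fun u => f'' (x u) (x' u) (x' u) + f' (x u) (x'' u))
      ((f''' a a + f'' (x 0) b) a + f'' (x 0) a b + (f'' (x 0) a b + f' (x 0) c)) s 0 :=
    hC.add hD
  have hZero : HasDerivWithinAt (fun u => f'' (x u) (x' u) (x' u) + f' (x u) (x'' u)) 0 s 0 :=
    (hasDerivWithinAt_const 0 s (0 : F)).congr_of_eventuallyEq hF2 (hF2.self_of_nhdsWithin h0s)
  have hkey0 : (f''' a a + f'' (x 0) b) a + f'' (x 0) a b + (f'' (x 0) a b + f' (x 0) c) = 0 := by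
    rw [← hSum.derivWithin (hs 0 h0s), hZero.derivWithin (hs 0 h0s)]
  have hsymm : f'' (x 0) b a = f'' (x 0) a b :=
    second_derivative_symmetric_of_eventually hdf hm0 b a
  rw [ContinuousLinearMap.add_apply, hsymm] at hkey0
  -- hkey0 : f''' a a a + f'' (x 0) a b + f'' (x 0) a b + (f'' (x 0) a b + f' (x 0) c) = 0
  -- express the goal quantities
  have hc1a : c₁ = ε • a := hc₁
  have hc2b : c₂ = (ε ^ 2 / 2) • b := by rw [hc₂, hEq2 h0s]
  have hc3c : c₃ = (ε ^ 3 / 6) • c := by rw [hc₃, h3c]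
  have hP : iteratedFDeriv ℝ 3 f (x 0) ![c₁, c₁, c₁] = (ε ^ 3) • f''' a a a := by
    rw [iteratedFDeriv_three_apply']
    simp only [Matrix.cons_val_zero, Matrix.cons_val_one, Matrix.head_cons, Matrix.cons_val_two,
      Matrix.tail_cons]
    rw [← hf'def, ← hf''def, ← hf'''def, hc1a]
    simp only [map_smul, ContinuousLinearMap.smul_apply]
    module
  have hQ : iteratedFDeriv ℝ 2 f (x 0) ![c₁, c₂] = (ε ^ 3 / 2) • f'' (x 0) a b := by
    rw [iteratedFDeriv_two_apply]
    simp only [Matrix.cons_val_zero, Matrix.cons_val_one, Matrix.head_cons]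
    rw [← hf'def, ← hf''def, hc1a, hc2b]
    simp only [map_smul, ContinuousLinearMap.smul_apply]
    module
  have hR : (J : E →L[ℝ] F) c₃ = (ε ^ 3 / 6) • f' (x 0) c := by
    rw [hJ, hc3c, map_smul]
  have hJc : J c₃ = (J : E →L[ℝ] F) c₃ := rfl
  have hmain : iteratedFDeriv ℝ 3 f (x 0) ![c₁, c₁, c₁]
      + (6 : ℝ) • iteratedFDeriv ℝ 2 f (x 0) ![c₁, c₂] + (6 : ℝ) • J c₃ = 0 := by
    rw [hP, hQ, hJc, hR]
    linear_combination (norm := module) (ε ^ 3 : ℝ) • hkey0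
  refine ⟨hmain, ?_⟩
  rw [eq_neg_of_add_eq_zero_left hmain]
  simp [smul_smul]
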